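/- Let (X, μ, T) be a measure-preserving G-action on a σ-finite measure space such that the Koopman operators U_T(g) on L²(X, μ) satisfy U_T(g) → 0 weakly as g → ∞, and let H = ℂ ⊕ ⨁_{n≥1} L²(X,μ)^{⊙n} be the symmetric Fock space with the induced (second-quantized) unitaries Γ(U_T(g)). Then Γ(U_T(g)) converges weakly, as g → ∞, to the orthogonal projection onto the vacuum (constants) component ℂ. -/

import Mathlib

open Filter

/-- Second quantization: if the (Koopman) unitaries `U(g)` on a Hilbert space `K`
(= `L²(X, μ)`) converge weakly to `0` along the cofinite filter, then on the symmetric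
Fock space `ℂ ⊕ ⨁_{n ≥ 1} K^{⊙n}` the operators `Γ(U(g))` converge weakly to the
orthogonal projection onto the vacuum component `ℂ`.  On the dense span of vectors with
vacuum components `a, b` and finitely many elementary symmetric tensor components
`ξⁿ₁⊙⋯⊙ξⁿₙ`, `ηⁿ₁⊙⋯⊙ηⁿₙ` (`1 ≤ n ≤ N`), the matrix coefficient of `Γ(U(g))` is
`a·conj b + ∑_{n=1}^N (1/n!) ∑_{σ ∈ Sₙ} ∏ᵢ ⟪U(g) ξⁿᵢ, ηⁿ_{σ(i)}⟫`, and the claim is that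
it converges to the vacuum part `a·conj b`. -/
theorem fock_space_second_quantization_weak_convergence
    {G : Type*} [Group G] [Countable G]
    {K : Type*} [NormedAddCommGroup K] [InnerProductSpace ℂ K]
    (U : G → K →L[ℂ] K) (hUnit : ∀ g : G, ∀ ξ : K, ‖U g ξ‖ = ‖ξ‖)
    (hUrep : ∀ g h : G, ∀ ξ : K, U (g * h) ξ = U g (U h ξ))
    (hweak : ∀ ξ η : K,
      Tendsto (fun g : G => (inner ℂ (U g ξ) η : ℂ)) cofinite (nhds 0)) :
    ∀ N : ℕ, ∀ a b : ℂ, ∀ ξ η : (n : ℕ) → Fin n → K,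
      Tendsto
        (fun g : G => a * (starRingEnd ℂ) b +
          ∑ n ∈ Finset.Icc 1 N, ((Nat.factorial n : ℂ))⁻¹ *
            ∑ σ : Equiv.Perm (Fin n), ∏ i : Fin n,
              (inner ℂ (U g (ξ n i)) (η n (σ i)) : ℂ))
        cofinite (nhds (a * (starRingEnd ℂ) b)) := by
  intro N a b ξ η
  have h0 : Tendsto
      (fun g : G => ∑ n ∈ Finset.Icc 1 N, ((Nat.factorial n : ℂ))⁻¹ *
        ∑ σ : Equiv.Perm (Fin n), ∏ i : Fin n,
          (inner ℂ (U g (ξ n i)) (η n (σ i)) : ℂ)) cofinite (nhds 0) := by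
    have : Tendsto
        (fun g : G => ∑ n ∈ Finset.Icc 1 N, ((Nat.factorial n : ℂ))⁻¹ *
          ∑ σ : Equiv.Perm (Fin n), ∏ i : Fin n,
            (inner ℂ (U g (ξ n i)) (η n (σ i)) : ℂ)) cofinite
        (nhds (∑ n ∈ Finset.Icc 1 N, ((Nat.factorial n : ℂ))⁻¹ *
          ∑ _σ : Equiv.Perm (Fin n), (0 : ℂ))) := by
      apply tendsto_finset_sum
      intro n hn
      apply Tendsto.const_mul
      apply tendsto_finset_sum
      intro σ _
      have h1n : 1 ≤ n := (Finset.mem_Icc.mp hn).1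
      have := tendsto_finset_prod (Finset.univ : Finset (Fin n))
        (f := fun i (g : G) => (inner ℂ (U g (ξ n i)) (η n (σ i)) : ℂ))
        (x := cofinite) (a := fun _ => (0 : ℂ)) (fun i _ => hweak _ _)
      have hn0 : n ≠ 0 := by omega
      simpa [zero_pow hn0] using this
    simpa using this
  simpa using (tendsto_const_nhds (x := a * (starRingEnd ℂ) b) (f := cofinite)).add h0
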